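/- arXiv:1504.00985 — 5 statements merged into one kernel-verified Lean document; each statement's English description precedes it below -/
import Mathlib

section
/- Let φ_c(z) = z² + c with c ∈ ℚ, K/ℚ a finite Galois extension of degree d, and (z_0, ..., z_{N-1}) an exact N-cycle of φ_c in K (i.e., φ_c(z_j) = z_{j+1 mod N} and the z_j are pairwise distinct). Let g = gcd(N, d). Then either (i) there exist m ∈ ℤ/gℤ and a nontrivial τ ∈ Gal(K/ℚ) with z_{m·(N/g)} = τ(z_0), or (ii) for every nontrivial τ ∈ Gal(K/ℚ), the sets {z_0,...,z_{N-1}} and {τ(z_0),...,τ(z_{N-1})} are disjoint. -/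
/-- Galois dichotomy for exact N-cycles of φ_c(z) = z² + c in a Galois
extension K/ℚ of degree d: either some z_{m·(N/g)} is a nontrivial Galois
conjugate of z_0, or every nontrivial Galois conjugate of the orbit is
disjoint from the orbit. Here g = gcd(N, d). -/
theorem galois_dichotomy (N d : ℕ) (hN : 0 < N)
    (K : Type*) [Field K] [Algebra ℚ K] [FiniteDimensional ℚ K] [IsGalois ℚ K]
    (hd : Module.finrank ℚ K = d)
    (c : ℚ) (z : ZMod N → K)
    (hcyc : ∀ j : ZMod N, (z j) ^ 2 + algebraMap ℚ K c = z (j + 1))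
    (hinj : Function.Injective z) :
    (∃ (m : ZMod (Nat.gcd N d)) (τ : K ≃ₐ[ℚ] K), τ ≠ 1 ∧
        z ((m.val * (N / Nat.gcd N d) : ℕ) : ZMod N) = τ (z 0)) ∨
    (∀ τ : K ≃ₐ[ℚ] K, τ ≠ 1 → ∀ j k : ZMod N, τ (z j) ≠ z k) := by
  classical
  haveI : NeZero N := ⟨hN.ne'⟩
  by_cases h : ∀ τ : K ≃ₐ[ℚ] K, τ ≠ 1 → ∀ j k : ZMod N, τ (z j) ≠ z k
  · exact Or.inr h
  push_neg at h
  obtain ⟨τ, hτ, j, k, hjk⟩ := h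
  left
  set a : ZMod N := k - j with ha
  have hnat : ∀ n : ℕ, τ (z (j + n)) = z (k + n) := by
    intro n
    induction n with
    | zero => simpa using hjk
    | succ n ih =>
      have h1 := hcyc (j + n)
      have h2 := hcyc (k + n)
      push_cast
      rw [← add_assoc, ← h1, ← add_assoc, ← h2]
      simp [ih]
  have hshift : ∀ t : ZMod N, τ (z t) = z (t + a) := by
    intro t
    have h0 := hnat (t - j).val
    rw [ZMod.natCast_val, ZMod.cast_id] at h0
    have e1 : j + (t - j) = t := by ring
    have e2 : k + (t - j) = t + a := by rw [ha]; ring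
    rw [e1, e2] at h0
    exact h0
  have hpow : ∀ s : ℕ, ∀ t : ZMod N, (τ ^ s) (z t) = z (t + s * a) := by
    intro s
    induction s with
    | zero => intro t; simp
    | succ s ih =>
      intro t
      rw [pow_succ, AlgEquiv.mul_apply, hshift, ih]
      congr 1
      push_cast
      ring
  have hd0 : 0 < d := hd ▸ Module.finrank_pos
  have hcard : Fintype.card (K ≃ₐ[ℚ] K) = d := by
    rw [← Nat.card_eq_fintype_card, IsGalois.card_aut_eq_finrank, hd]
  have hτd : τ ^ d = 1 := by rw [← hcard]; exact pow_card_eq_one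
  have hz : z ((d : ZMod N) * a) = z 0 := by
    have h0 := hpow d 0
    rw [hτd] at h0
    simpa using h0.symm
  have hda : ((d : ZMod N)) * a = 0 := by
    have := hinj hz
    simpa using this
  have hdvd : N ∣ d * a.val := by
    have h0 : ((d * a.val : ℕ) : ZMod N) = 0 := by
      push_cast
      rw [ZMod.natCast_val, ZMod.cast_id]
      exact hda
    exact (ZMod.natCast_eq_zero_iff _ _).mp h0
  set g := Nat.gcd N d with hgdef
  have hg : 0 < g := Nat.gcd_pos_of_pos_left _ hN
  have hNg : (N / g) * g = N := Nat.div_mul_cancel (Nat.gcd_dvd_left N d)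
  have hdg : (d / g) * g = d := Nat.div_mul_cancel (Nat.gcd_dvd_right N d)
  have hdvd2 : (N / g) ∣ (d / g) * a.val := by
    have h0 : (N / g) * g ∣ ((d / g) * a.val) * g := by
      rw [hNg, mul_right_comm, hdg]; exact hdvd
    exact (Nat.mul_dvd_mul_iff_right hg).mp h0
  have hcop : Nat.Coprime (N / g) (d / g) := Nat.coprime_div_gcd_div_gcd hg
  have hfin : (N / g) ∣ a.val := hcop.dvd_of_dvd_mul_left hdvd2
  obtain ⟨m', hm'⟩ := hfin
  haveI : NeZero g := ⟨hg.ne'⟩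
  refine ⟨(m' : ZMod g), τ, hτ, ?_⟩
  have hτ0 : τ (z 0) = z a := by simpa using hshift 0
  rw [hτ0, ZMod.val_natCast]
  congr 1
  have key : (N / g) * m' = (N / g) * g * (m' / g) + (m' % g) * (N / g) := by
    conv_lhs => rw [← Nat.div_add_mod m' g]
    ring
  have haval : a = ((a.val : ℕ) : ZMod N) := by
    rw [ZMod.natCast_val, ZMod.cast_id]
  have h00 : ((N / g : ℕ) : ZMod N) * (g : ℕ) = 0 := by
    rw [← Nat.cast_mul, hNg, ZMod.natCast_self]
  rw [haval, hm', key]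
  push_cast
  rw [h00]
  ring
end

section
/- Let φ_c(z) = z² + c with c ∈ ℚ, K/ℚ a finite Galois extension of degree d, and (z_0,...,z_{N-1}) an exact N-cycle of φ_c in K. If τ ∈ Gal(K/ℚ) satisfies τ(z_0) = z_k, then N divides k·d. -/
/-- If K/ℚ is Galois of degree d and τ ∈ Gal(K/ℚ) sends z_0 to z_k in an
exact N-cycle of φ_c(z) = z² + c, then N divides k·d. -/
theorem period_divides (N d : ℕ) (hN : 0 < N)
    (K : Type*) [Field K] [Algebra ℚ K] [FiniteDimensional ℚ K] [IsGalois ℚ K]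
    (hd : Module.finrank ℚ K = d)
    (c : ℚ) (z : ZMod N → K)
    (hcyc : ∀ j : ZMod N, (z j) ^ 2 + algebraMap ℚ K c = z (j + 1))
    (hinj : Function.Injective z)
    (τ : K ≃ₐ[ℚ] K) (k : ZMod N) (h : τ (z 0) = z k) :
    N ∣ k.val * d := by
  haveI : NeZero N := ⟨hN.ne'⟩
  -- τ shifts the cycle by k
  have hshift : ∀ n : ℕ, τ (z (n : ZMod N)) = z ((n : ZMod N) + k) := by
    intro n
    induction n with
    | zero => simpa using h
    | succ n ih =>
      have h1 := hcyc (n : ZMod N)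
      have h2 := hcyc ((n : ZMod N) + k)
      push_cast
      rw [← h1, map_add, map_pow, AlgEquiv.commutes, ih, h2]
      ring_nf
  have hshift' : ∀ j : ZMod N, τ (z j) = z (j + k) := by
    intro j
    have := hshift j.val
    rwa [ZMod.natCast_val, ZMod.cast_id] at this
  -- τ^m shifts by m • k
  have hpow : ∀ m : ℕ, (τ ^ m) (z 0) = z ((m : ZMod N) * k) := by
    intro m
    induction m with
    | zero => simp
    | succ m ih =>
      have : (τ ^ (m + 1)) (z 0) = τ ((τ ^ m) (z 0)) := by
        rw [pow_succ']; rfl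
      rw [this, ih, hshift']
      push_cast
      ring_nf
  -- τ ^ d = 1
  have hcard : Fintype.card (K ≃ₐ[ℚ] K) = d := by
    rw [← Nat.card_eq_fintype_card, IsGalois.card_aut_eq_finrank, hd]
  have hτd : τ ^ d = 1 := by
    rw [← hcard]; exact pow_card_eq_one
  have := hpow d
  rw [hτd] at this
  simp only [AlgEquiv.one_apply] at this
  have h0 : ((d : ZMod N) * k) = 0 := by
    have := hinj this.symm
    exact this.symm ▸ rfl
  have : ((k.val * d : ℕ) : ZMod N) = 0 := by
    push_cast
    rw [ZMod.natCast_val, ZMod.cast_id]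
    rw [mul_comm] at h0
    exact h0
  exact (ZMod.natCast_eq_zero_iff _ _).mp this
end

section
/- Let φ_c(z) = z² + c with c ∈ ℚ, N even, K/ℚ a quadratic extension with nontrivial automorphism τ, and (z_0,...,z_{N-1}) an exact N-cycle of φ_c in K. If τ(z_0) = z_{N/2}, then for every j, z_j + z_{j + N/2} is rational, and in particular the trace z_0 + z_1 + ... + z_{N-1} of the cycle is rational. -/
lemma fixed_rational (K : Type*) [Field K] [Algebra ℚ K] [FiniteDimensional ℚ K]
    (hquad : Module.finrank ℚ K = 2) (τ : K ≃ₐ[ℚ] K) (hτ : τ ≠ 1)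
    (x : K) (hx : τ x = x) : ∃ q : ℚ, algebraMap ℚ K q = x := by
  by_contra hcon
  push_neg at hcon
  have li : LinearIndependent ℚ ![(1 : K), x] := by
    rw [LinearIndependent.pair_iff]
    intro s t hst
    rw [Algebra.smul_def, Algebra.smul_def, mul_one] at hst
    have ht : t = 0 := by
      by_contra ht
      apply hcon (-s / t)
      have ht' : algebraMap ℚ K t ≠ 0 := by
        simpa using (algebraMap ℚ K).injective.ne ht
      rw [map_div₀, map_neg, div_eq_iff ht']
      linear_combination -hst
    subst ht
    simp only [map_zero, zero_mul, add_zero] at hst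
    exact ⟨(algebraMap ℚ K).injective (by simpa using hst), rfl⟩
  apply hτ
  have key : τ.toLinearMap = (LinearMap.id : K →ₗ[ℚ] K) := by
    apply (basisOfLinearIndependentOfCardEqFinrank li (by simp [hquad])).ext
    intro i
    rw [coe_basisOfLinearIndependentOfCardEqFinrank]
    fin_cases i
    · simpa using map_one τ
    · simpa using hx
  ext y
  exact congrFun (congrArg (fun f => f.toFun) key) y

/-- For N even and K/ℚ quadratic with nontrivial automorphism τ, if
τ(z_0) = z_{N/2} for an exact N-cycle of φ_c(z) = z² + c, then each
z_j + z_{j+N/2} is rational, and in particular the trace of the cycle is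
rational. -/
theorem even_cycle_trace_rational (N : ℕ) (hN : 0 < N) (heven : Even N)
    (K : Type*) [Field K] [Algebra ℚ K] [FiniteDimensional ℚ K]
    (hquad : Module.finrank ℚ K = 2)
    (c : ℚ) (z : ZMod N → K)
    (hcyc : ∀ j : ZMod N, (z j) ^ 2 + algebraMap ℚ K c = z (j + 1))
    (hinj : Function.Injective z)
    (τ : K ≃ₐ[ℚ] K) (hτ : τ ≠ 1)
    (h : τ (z 0) = z ((N / 2 : ℕ) : ZMod N)) :
    (∀ j : ZMod N, ∃ q : ℚ,
        algebraMap ℚ K q = z j + z (j + ((N / 2 : ℕ) : ZMod N))) ∧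
    (∃ q : ℚ, algebraMap ℚ K q = ∑ j ∈ Finset.range N, z (j : ZMod N)) := by
  haveI : NeZero N := ⟨hN.ne'⟩
  set m : ZMod N := ((N / 2 : ℕ) : ZMod N) with hm
  have hmm : m + m = 0 := by
    rw [hm, ← Nat.cast_add]
    have : N / 2 + N / 2 = N := by
      obtain ⟨k, hk⟩ := heven; omega
    rw [this, ZMod.natCast_self]
  -- τ shifts the cycle by m
  have key : ∀ k : ℕ, τ (z (k : ZMod N)) = z ((k : ZMod N) + m) := by
    intro k
    induction k with
    | zero => simpa using h
    | succ k ih =>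
        have h1 : ((k + 1 : ℕ) : ZMod N) = (k : ZMod N) + 1 := by push_cast; ring
        rw [h1, ← hcyc, map_add, map_pow, AlgEquiv.commutes, ih, hcyc]
        ring_nf
  have key' : ∀ j : ZMod N, τ (z j) = z (j + m) := by
    intro j
    rw [← ZMod.natCast_rightInverse j]
    exact key j.val
  have hfix : ∀ j : ZMod N, τ (z j + z (j + m)) = z j + z (j + m) := by
    intro j
    rw [map_add, key', key', add_assoc, hmm, add_zero, add_comm]
  have part1 : ∀ j : ZMod N, ∃ q : ℚ, algebraMap ℚ K q = z j + z (j + m) :=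
    fun j => fixed_rational K hquad τ hτ _ (hfix j)
  refine ⟨part1, ?_⟩
  -- the trace
  have hsum : (∑ j ∈ Finset.range N, z (j : ZMod N)) = ∑ j : ZMod N, z j := by
    rw [Finset.sum_range (fun i => z (i : ZMod N))]
    refine Fintype.sum_bijective (fun i : Fin N => ((i : ℕ) : ZMod N)) ?_ _ _ (fun i => rfl)
    refine Function.bijective_iff_has_inverse.mpr ⟨fun j => ⟨j.val, j.val_lt⟩, fun i => ?_, fun j => ?_⟩
    · exact Fin.ext (ZMod.val_cast_of_lt i.isLt)
    · exact ZMod.natCast_rightInverse j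
  rw [hsum]
  refine fixed_rational K hquad τ hτ _ ?_
  rw [map_sum]
  calc ∑ j : ZMod N, τ (z j) = ∑ j : ZMod N, z (j + m) := by
        exact Finset.sum_congr rfl fun j _ => key' j
    _ = ∑ j : ZMod N, z j := Fintype.sum_equiv (Equiv.addRight m) _ _ (fun j => rfl)
end

section
/- Let c = -71/48 and φ_c(z) = z² + c over K = ℚ(√33). Then z_0 = -1 + √33/12, z_1 = -1/4 - √33/6, z_2 = -1/2 + √33/12, z_3 = conj(z_0), z_4 = conj(z_1), z_5 = conj(z_2) form an exact 6-cycle of φ_c: the six points are pairwise distinct, φ_c(z_j) = z_{(j+1) mod 6} for all j. -/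
lemma no_rat_sqrt_33 : ∀ r : ℚ, r ^ 2 ≠ 33 := by
  intro r hr
  have hnum : r.num ^ 2 = 33 := by
    have := congrArg Rat.num hr
    simpa [Rat.num_pow] using this
  have hm : r.num.natAbs ^ 2 = 33 := by
    have := congrArg Int.natAbs hnum
    simpa [Int.natAbs_pow] using this
  have h5 : r.num.natAbs = Nat.sqrt 33 := by rw [← hm, Nat.sqrt_eq']
  rw [h5] at hm
  norm_num at hm

/-- In K = ℚ(√33), with c = -71/48, the six points
z₀ = -1 + √33/12, z₁ = -1/4 - √33/6, z₂ = -1/2 + √33/12, z₃ = conj z₀,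
z₄ = conj z₁, z₅ = conj z₂ form an exact 6-cycle of φ_c(z) = z² + c. -/
theorem six_cycle_sqrt33
    (K : Type*) [Field K] [Algebra ℚ K] [FiniteDimensional ℚ K]
    (hquad : Module.finrank ℚ K = 2)
    (s : K) (hs : s ^ 2 = 33)
    (τ : K ≃ₐ[ℚ] K) (hτ : τ s = -s)
    (z : ZMod 6 → K)
    (hz0 : z 0 = algebraMap ℚ K (-1) + s / 12)
    (hz1 : z 1 = algebraMap ℚ K (-1 / 4) - s / 6)
    (hz2 : z 2 = algebraMap ℚ K (-1 / 2) + s / 12)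
    (hz3 : z 3 = τ (z 0)) (hz4 : z 4 = τ (z 1)) (hz5 : z 5 = τ (z 2)) :
    Function.Injective z ∧
      ∀ j : ZMod 6, (z j) ^ 2 + algebraMap ℚ K (-71 / 48) = z (j + 1) := by
  have hinj : Function.Injective (algebraMap ℚ K) := (algebraMap ℚ K).injective
  haveI : CharZero K := charZero_of_injective_algebraMap hinj
  have key : ∀ p q : ℚ, (p : K) + (q : K) * s = 0 → p = 0 ∧ q = 0 := by
    intro p q h
    by_cases hq : q = 0
    · subst hq
      refine ⟨?_, rfl⟩
      have : (p : K) = 0 := by simpa using h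
      exact_mod_cast this
    · exfalso
      have hq' : (q : K) ≠ 0 := Rat.cast_ne_zero.mpr hq
      have hsEq : s = ((-p / q : ℚ) : K) := by
        push_cast
        rw [eq_div_iff hq']
        linear_combination h
      have h2 : ((-p / q : ℚ) : K) ^ 2 = ((33 : ℚ) : K) := by
        rw [← hsEq, hs]; norm_num
      have h3 : (-p / q : ℚ) ^ 2 = 33 := by exact_mod_cast h2
      exact no_rat_sqrt_33 _ h3
  have e0 : z 0 = -1 + s / 12 := by
    rw [hz0]; simp only [map_neg, map_one]
  have e1 : z 1 = -(1/4) - s / 6 := by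
    rw [hz1]; simp only [map_div₀, map_neg, map_one, map_ofNat]; ring
  have e2 : z 2 = -(1/2) + s / 12 := by
    rw [hz2]; simp only [map_div₀, map_neg, map_one, map_ofNat]; ring
  have e3 : z 3 = -1 - s / 12 := by
    rw [hz3, hz0]
    simp only [map_add, map_div₀, map_neg, map_one, map_ofNat, AlgEquiv.commutes, hτ]
    ring
  have e4 : z 4 = -(1/4) + s / 6 := by
    rw [hz4, hz1]
    simp only [map_sub, map_div₀, map_neg, map_one, map_ofNat, AlgEquiv.commutes, hτ]
    ring
  have e5 : z 5 = -(1/2) - s / 12 := by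
    rw [hz5, hz2]
    simp only [map_add, map_div₀, map_neg, map_one, map_ofNat, AlgEquiv.commutes, hτ]
    ring
  have hcases : ∀ j : ZMod 6, j = 0 ∨ j = 1 ∨ j = 2 ∨ j = 3 ∨ j = 4 ∨ j = 5 := by decide
  constructor
  · intro i j h
    rcases hcases i with rfl | rfl | rfl | rfl | rfl | rfl <;>
      rcases hcases j with rfl | rfl | rfl | rfl | rfl | rfl
    · rfl
    · rw [e0, e1] at h
      exact absurd (key (-3/4 : ℚ) (1/4 : ℚ) (by push_cast; linear_combination h)).2 (by norm_num)
    · rw [e0, e2] at h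
      exact absurd (key (-1/2 : ℚ) (0 : ℚ) (by push_cast; linear_combination h)).1 (by norm_num)
    · rw [e0, e3] at h
      exact absurd (key (0 : ℚ) (1/6 : ℚ) (by push_cast; linear_combination h)).2 (by norm_num)
    · rw [e0, e4] at h
      exact absurd (key (-3/4 : ℚ) (-1/12 : ℚ) (by push_cast; linear_combination h)).2 (by norm_num)
    · rw [e0, e5] at h
      exact absurd (key (-1/2 : ℚ) (1/6 : ℚ) (by push_cast; linear_combination h)).2 (by norm_num)
    · rw [e1, e0] at h
      exact absurd (key (3/4 : ℚ) (-1/4 : ℚ) (by push_cast; linear_combination h)).2 (by norm_num)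
    · rfl
    · rw [e1, e2] at h
      exact absurd (key (1/4 : ℚ) (-1/4 : ℚ) (by push_cast; linear_combination h)).2 (by norm_num)
    · rw [e1, e3] at h
      exact absurd (key (3/4 : ℚ) (-1/12 : ℚ) (by push_cast; linear_combination h)).2 (by norm_num)
    · rw [e1, e4] at h
      exact absurd (key (0 : ℚ) (-1/3 : ℚ) (by push_cast; linear_combination h)).2 (by norm_num)
    · rw [e1, e5] at h
      exact absurd (key (1/4 : ℚ) (-1/12 : ℚ) (by push_cast; linear_combination h)).2 (by norm_num)
    · rw [e2, e0] at h
      exact absurd (key (1/2 : ℚ) (0 : ℚ) (by push_cast; linear_combination h)).1 (by norm_num)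
    · rw [e2, e1] at h
      exact absurd (key (-1/4 : ℚ) (1/4 : ℚ) (by push_cast; linear_combination h)).2 (by norm_num)
    · rfl
    · rw [e2, e3] at h
      exact absurd (key (1/2 : ℚ) (1/6 : ℚ) (by push_cast; linear_combination h)).2 (by norm_num)
    · rw [e2, e4] at h
      exact absurd (key (-1/4 : ℚ) (-1/12 : ℚ) (by push_cast; linear_combination h)).2 (by norm_num)
    · rw [e2, e5] at h
      exact absurd (key (0 : ℚ) (1/6 : ℚ) (by push_cast; linear_combination h)).2 (by norm_num)
    · rw [e3, e0] at h
      exact absurd (key (0 : ℚ) (-1/6 : ℚ) (by push_cast; linear_combination h)).2 (by norm_num)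
    · rw [e3, e1] at h
      exact absurd (key (-3/4 : ℚ) (1/12 : ℚ) (by push_cast; linear_combination h)).2 (by norm_num)
    · rw [e3, e2] at h
      exact absurd (key (-1/2 : ℚ) (-1/6 : ℚ) (by push_cast; linear_combination h)).2 (by norm_num)
    · rfl
    · rw [e3, e4] at h
      exact absurd (key (-3/4 : ℚ) (-1/4 : ℚ) (by push_cast; linear_combination h)).2 (by norm_num)
    · rw [e3, e5] at h
      exact absurd (key (-1/2 : ℚ) (0 : ℚ) (by push_cast; linear_combination h)).1 (by norm_num)
    · rw [e4, e0] at h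
      exact absurd (key (3/4 : ℚ) (1/12 : ℚ) (by push_cast; linear_combination h)).2 (by norm_num)
    · rw [e4, e1] at h
      exact absurd (key (0 : ℚ) (1/3 : ℚ) (by push_cast; linear_combination h)).2 (by norm_num)
    · rw [e4, e2] at h
      exact absurd (key (1/4 : ℚ) (1/12 : ℚ) (by push_cast; linear_combination h)).2 (by norm_num)
    · rw [e4, e3] at h
      exact absurd (key (3/4 : ℚ) (1/4 : ℚ) (by push_cast; linear_combination h)).2 (by norm_num)
    · rfl
    · rw [e4, e5] at h
      exact absurd (key (1/4 : ℚ) (1/4 : ℚ) (by push_cast; linear_combination h)).2 (by norm_num)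
    · rw [e5, e0] at h
      exact absurd (key (1/2 : ℚ) (-1/6 : ℚ) (by push_cast; linear_combination h)).2 (by norm_num)
    · rw [e5, e1] at h
      exact absurd (key (-1/4 : ℚ) (1/12 : ℚ) (by push_cast; linear_combination h)).2 (by norm_num)
    · rw [e5, e2] at h
      exact absurd (key (0 : ℚ) (-1/6 : ℚ) (by push_cast; linear_combination h)).2 (by norm_num)
    · rw [e5, e3] at h
      exact absurd (key (1/2 : ℚ) (0 : ℚ) (by push_cast; linear_combination h)).1 (by norm_num)
    · rw [e5, e4] at h
      exact absurd (key (-1/4 : ℚ) (-1/4 : ℚ) (by push_cast; linear_combination h)).2 (by norm_num)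
    · rfl
  · intro j
    have hc : ∀ a : ℚ, algebraMap ℚ K a = (a : K) := fun a => by
      simp [eq_ratCast]
    rcases hcases j with rfl | rfl | rfl | rfl | rfl | rfl
    · rw [show ((0:ZMod 6)+1) = 1 by decide, e0, e1, hc]
      push_cast
      linear_combination hs / 144
    · rw [show ((1:ZMod 6)+1) = 2 by decide, e1, e2, hc]
      push_cast
      linear_combination hs / 36
    · rw [show ((2:ZMod 6)+1) = 3 by decide, e2, e3, hc]
      push_cast
      linear_combination hs / 144
    · rw [show ((3:ZMod 6)+1) = 4 by decide, e3, e4, hc]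
      push_cast
      linear_combination hs / 144
    · rw [show ((4:ZMod 6)+1) = 5 by decide, e4, e5, hc]
      push_cast
      linear_combination hs / 36
    · rw [show ((5:ZMod 6)+1) = 0 by decide, e5, e0, hc]
      push_cast
      linear_combination hs / 144
end

section
/- Let a, b, c ∈ ℚ satisfy a = 3 and λ_1(3, b, c) = λ_0(3, b, c) = 0, where λ_1 and λ_0 are the explicit polynomials below. Then there is no solution: for a = 3, the resultant in c of λ_1(3,b,c) and λ_0(3,b,c) is a polynomial in b whose only rational root is b = 0, but λ_1(3, 0, c) = -64 ≠ 0 for all c. -/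
/-- λ₁(a,b,c) from the period-5 analysis. -/
def lam1 (a b c : ℚ) : ℚ :=
  16 * (a - 3) * (2 * b - a * (a - 3)) * c ^ 2
    - 4 * (a ^ 5 - 10 * a ^ 4 - 4 * a ^ 3 * b + 46 * a ^ 3 + 30 * a ^ 2 * b
        + 3 * a * b ^ 2 - 104 * a ^ 2 - 92 * a * b - 10 * b ^ 2 + 95 * a
        + 104 * b - 24) * c
    - (8 * a ^ 5 - 74 * a ^ 4 - 32 * a ^ 3 * b + 271 * a ^ 3 + 222 * a ^ 2 * b
        + 24 * a * b ^ 2 - 452 * a ^ 2 - 542 * a * b - 74 * b ^ 2 + 325 * a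
        + 452 * b - 110)

/-- λ₀(a,b,c) from the period-5 analysis. -/
def lam0 (a b c : ℚ) : ℚ :=
  16 * b * (b - (a - 3) ^ 2) * c ^ 2
    - 4 * (a ^ 4 * b - 10 * a ^ 3 * b - 3 * a ^ 2 * b ^ 2 + 46 * a ^ 2 * b
        + 20 * a * b ^ 2 + b ^ 3 - 104 * a * b - 46 * b ^ 2 + 95 * b - 9) * c
    - (8 * a ^ 4 * b - 74 * a ^ 3 * b - 24 * a ^ 2 * b ^ 2 + 271 * a ^ 2 * b
        + 148 * a * b ^ 2 + 8 * b ^ 3 - 452 * a * b - 271 * b ^ 2 + 325 * b - 64)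

/-- Case a = 3 of the period-5 analysis admits no rational solution:
there are no b, c ∈ ℚ with λ₁(3,b,c) = λ₀(3,b,c) = 0. -/
theorem no_solution_a_eq_three (a b c : ℚ) (ha : a = 3)
    (h1 : lam1 a b c = 0) (h0 : lam0 a b c = 0) : False := by
  subst ha
  unfold lam1 at h1; unfold lam0 at h0
  -- resultant in c
  have hres : b * (6*b^6 + 79*b^5 + 266*b^4 - 2*b^3 - 828*b^2 - 2352*b - 5760) = 0 := by
    linear_combination ((16*b^2*(4*b^2+40*b)*c + (-4*b^3+52*b^2-32*b+36)*(4*b^2+40*b)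
        - 16*b^2*(2*b^2+40*b-64))/16) * h1 - ((4*b^2+40*b)^2/16) * h0
  rcases mul_eq_zero.mp hres with hb | hG
  · subst hb
    norm_num at h1
  · -- b is a rational root of the sextic; clear denominators
    set n : ℤ := b.num with hn
    set d : ℤ := (b.den : ℤ) with hd
    have hdne : (d : ℚ) ≠ 0 := by
      simpa [hd] using (Nat.cast_ne_zero (α := ℚ)).mpr b.den_nz
    have hbnd : (b : ℚ) = (n : ℚ) / (d : ℚ) := by
      rw [hn, hd]; exact_mod_cast (Rat.num_div_den b).symm
    have e : (n : ℚ) = b * (d : ℚ) := by rw [hbnd]; field_simp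
    have hZQ : (6*(n:ℚ)^6 + 79*(n:ℚ)^5*(d:ℚ) + 266*(n:ℚ)^4*(d:ℚ)^2 - 2*(n:ℚ)^3*(d:ℚ)^3
        - 828*(n:ℚ)^2*(d:ℚ)^4 - 2352*(n:ℚ)*(d:ℚ)^5 - 5760*(d:ℚ)^6) = 0 := by
      rw [e]; linear_combination (d:ℚ)^6 * hG
    have hZ : 6*n^6 + 79*n^5*d + 266*n^4*d^2 - 2*n^3*d^3
        - 828*n^2*d^4 - 2352*n*d^5 - 5760*d^6 = 0 := by exact_mod_cast hZQ
    -- reduce mod 13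
    have h13 : (6*(n : ZMod 13)^6 + 79*(n : ZMod 13)^5*(d : ZMod 13)
        + 266*(n : ZMod 13)^4*(d : ZMod 13)^2 - 2*(n : ZMod 13)^3*(d : ZMod 13)^3
        - 828*(n : ZMod 13)^2*(d : ZMod 13)^4 - 2352*(n : ZMod 13)*(d : ZMod 13)^5
        - 5760*(d : ZMod 13)^6) = 0 := by
      have := congrArg (Int.cast : ℤ → ZMod 13) hZ
      push_cast at this
      linear_combination this
    have key : ∀ x y : ZMod 13, (6*x^6 + 79*x^5*y + 266*x^4*y^2 - 2*x^3*y^3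
        - 828*x^2*y^4 - 2352*x*y^5 - 5760*y^6) = 0 → x = 0 ∧ y = 0 := by decide
    obtain ⟨hx0, hy0⟩ := key _ _ h13
    have hdvdn : (13 : ℤ) ∣ n := by
      exact_mod_cast (ZMod.intCast_zmod_eq_zero_iff_dvd n 13).mp hx0
    have hdvdd : (13 : ℤ) ∣ d := by
      exact_mod_cast (ZMod.intCast_zmod_eq_zero_iff_dvd d 13).mp hy0
    have hcop := b.reduced
    have h1' : (13 : ℕ) ∣ b.num.natAbs := by
      rwa [Int.natCast_dvd_natCast.symm, Int.dvd_natAbs]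
    have h2' : (13 : ℕ) ∣ b.den := by
      rw [hd] at hdvdd; exact_mod_cast hdvdd
    have h13d : (13 : ℕ) ∣ 1 := hcop ▸ Nat.dvd_gcd h1' h2'
    omega
end
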